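/- Let G be an r-regular simple graph with n vertices and m ≥ 1 edges, and let q_1 ≤ q_2 ≤ … ≤ q_n = 2r be the eigenvalues of Q(G) listed with multiplicity. Then f(λ, G^{-11}) = [(λ-2m-n+2)(λ-m-2n+2r+2) - mn]·(λ-m-n+2)^{m-1}·∏_{i=1}^{n-1}(λ - m - n + 2 + q_i). -/

import Mathlib

open Classical

/-- The four symbols `0, 1, +, -` used in `xyz`-transformations. -/
inductive XYZ : Type
  | zero | one | plus | minus

namespace XYZ

/-- The relation on the vertices of a graph `H` given by a symbol:
`0` gives the empty graph, `1` the complete graph, `+` the graph itself,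
`-` its complement. -/
def rel {W : Type*} (H : SimpleGraph W) : XYZ → W → W → Prop
  | .zero => fun _ _ => False
  | .one  => fun u v => u ≠ v
  | .plus => fun u v => H.Adj u v
  | .minus => fun u v => u ≠ v ∧ ¬ H.Adj u v

/-- The incidence relation between a vertex and an edge given by a symbol `z`:
`+` means incident, `-` means non-incident, `0` never, `1` always. -/
def inc {W : Type*} (G : SimpleGraph W) : XYZ → W → G.edgeSet → Prop
  | .zero => fun _ _ => False
  | .one  => fun _ _ => True
  | .plus => fun v e => v ∈ (e : Sym2 W)
  | .minus => fun v e => v ∉ (e : Sym2 W)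

theorem rel_symm {W : Type*} (H : SimpleGraph W) (x : XYZ) {u v : W}
    (h : rel H x u v) : rel H x v u := by
  cases x with
  | zero => exact h.elim
  | one => exact (h : u ≠ v).symm
  | plus => exact H.adj_symm h
  | minus => exact ⟨(h.1).symm, fun h' => h.2 (H.adj_symm h')⟩

theorem rel_irrefl {W : Type*} (H : SimpleGraph W) (x : XYZ) {u : W}
    (h : rel H x u u) : False := by
  cases x with
  | zero => exact h
  | one => exact h rfl
  | plus => exact H.ne_of_adj h rfl
  | minus => exact h.1 rfl

end XYZ

/-- The `xyz`-transformation `G^{xyz}` of a graph `G`: its vertex set is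
`V(G) ⊕ E(G)`; two vertices of `G` are adjacent according to the symbol `x`
(applied to `G`), two edges according to the symbol `y` (applied to the line
graph of `G`), and a vertex and an edge according to the symbol `z`
(`+` = incidence graph `B(G)`, `-` = non-incidence graph `B^c(G)`,
`0` = no vertex-edge edges, `1` = all vertex-edge edges). -/
def xyzTransform {V : Type*} (G : SimpleGraph V) (x y z : XYZ) :
    SimpleGraph (V ⊕ G.edgeSet) where
  Adj a b :=
    match a, b with
    | Sum.inl u, Sum.inl v => XYZ.rel G x u v
    | Sum.inr e, Sum.inr f => XYZ.rel G.lineGraph y e f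
    | Sum.inl v, Sum.inr e => XYZ.inc G z v e
    | Sum.inr e, Sum.inl v => XYZ.inc G z v e
  symm := ⟨by
    rintro (u | e) (v | f) h
    · exact XYZ.rel_symm G x h
    · exact h
    · exact h
    · exact XYZ.rel_symm G.lineGraph y h⟩
  loopless := ⟨by
    rintro (u | e) h
    · exact XYZ.rel_irrefl G x h
    · exact XYZ.rel_irrefl G.lineGraph y h⟩

/-- The signless Laplacian matrix `Q(G) = D(G) + A(G)` of a graph. -/
noncomputable def signlessLaplacian {V : Type*} [Fintype V] (G : SimpleGraph V) :
    Matrix V V ℝ :=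
  Matrix.of fun u v =>
    (if u = v then (G.degree u : ℝ) else 0) + (if G.Adj u v then 1 else 0)

/-- The signless Laplacian characteristic polynomial
`f(λ, G) = det (λ I - Q(G))`, evaluated at a real number `λ`. -/
noncomputable def fQ {V : Type*} [Fintype V] (G : SimpleGraph V) (lam : ℝ) : ℝ :=
  Matrix.det (lam • (1 : Matrix V V ℝ) - signlessLaplacian G)


lemma my_det_congr {n : Type*} [Fintype n] {inst1 inst2 : DecidableEq n} {M N : Matrix n n ℝ}
    (h : M = N) : @Matrix.det n inst1 _ ℝ _ M = @Matrix.det n inst2 _ ℝ _ N := by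
  subst h
  exact congrArg (fun i : DecidableEq n => @Matrix.det n i _ ℝ _ M) (Subsingleton.elim inst1 inst2)
open Matrix SimpleGraph in
lemma xyz_deg_inl {V : Type*} [Fintype V] (G : SimpleGraph V) (v : V)
    [Fintype ((xyzTransform G .minus .one .one).neighborSet (Sum.inl v))] :
    (xyzTransform G .minus .one .one).degree (Sum.inl v) =
      (Fintype.card V - 1 - G.degree v) + Fintype.card G.edgeSet := by
  classical
  rw [← SimpleGraph.card_neighborSet_eq_degree]
  have : Fintype.card ((xyzTransform G .minus .one .one).neighborSet (Sum.inl v)) =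
      Fintype.card {u : V // (xyzTransform G .minus .one .one).Adj (Sum.inl v) (Sum.inl u)}
      + Fintype.card {e : G.edgeSet // (xyzTransform G .minus .one .one).Adj (Sum.inl v) (Sum.inr e)} := by
    rw [← Fintype.card_sum]
    exact Fintype.card_congr Equiv.subtypeSum
  rw [this]
  have h1 : Fintype.card {u : V // (xyzTransform G .minus .one .one).Adj (Sum.inl v) (Sum.inl u)}
      = Fintype.card V - 1 - G.degree v := by
    rw [← SimpleGraph.degree_compl (G := G) (v := v), ← SimpleGraph.card_neighborSet_eq_degree]
    apply Fintype.card_congr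
    apply Equiv.subtypeEquivRight
    intro u
    simp [xyzTransform, XYZ.rel, SimpleGraph.compl_adj, SimpleGraph.mem_neighborSet]
  have h2 : Fintype.card {e : G.edgeSet // (xyzTransform G .minus .one .one).Adj (Sum.inl v) (Sum.inr e)}
      = Fintype.card G.edgeSet := by
    apply Fintype.card_congr
    apply Equiv.subtypeUnivEquiv
    intro e
    trivial
  omega

open Matrix SimpleGraph in
lemma xyz_deg_inr {V : Type*} [Fintype V] (G : SimpleGraph V) (e : G.edgeSet)
    [Fintype ((xyzTransform G .minus .one .one).neighborSet (Sum.inr e))] :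
    (xyzTransform G .minus .one .one).degree (Sum.inr e) =
      (Fintype.card G.edgeSet - 1) + Fintype.card V := by
  classical
  rw [← SimpleGraph.card_neighborSet_eq_degree]
  have : Fintype.card ((xyzTransform G .minus .one .one).neighborSet (Sum.inr e)) =
      Fintype.card {u : V // (xyzTransform G .minus .one .one).Adj (Sum.inr e) (Sum.inl u)}
      + Fintype.card {f : G.edgeSet // (xyzTransform G .minus .one .one).Adj (Sum.inr e) (Sum.inr f)} := by
    rw [← Fintype.card_sum]
    exact Fintype.card_congr Equiv.subtypeSum
  rw [this]
  have h1 : Fintype.card {u : V // (xyzTransform G .minus .one .one).Adj (Sum.inr e) (Sum.inl u)}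
      = Fintype.card V := by
    apply Fintype.card_congr
    apply Equiv.subtypeUnivEquiv
    intro u; trivial
  have h2 : Fintype.card {f : G.edgeSet // (xyzTransform G .minus .one .one).Adj (Sum.inr e) (Sum.inr f)}
      = Fintype.card G.edgeSet - 1 := by
    have : Fintype.card {f : G.edgeSet // ¬ (e = f)} = Fintype.card G.edgeSet - 1 := by
      rw [Fintype.card_subtype_compl, Fintype.card_subtype_eq']
    rw [← this]
    apply Fintype.card_congr
    apply Equiv.subtypeEquivRight
    intro f
    simp [xyzTransform, XYZ.rel]
  omega
lemma xyz_adj_ll {V : Type*} (G : SimpleGraph V) (x y z : XYZ) (u v : V) :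
    (xyzTransform G x y z).Adj (Sum.inl u) (Sum.inl v) ↔ XYZ.rel G x u v := Iff.rfl
lemma xyz_adj_lr {V : Type*} (G : SimpleGraph V) (x y z : XYZ) (u : V) (e : G.edgeSet) :
    (xyzTransform G x y z).Adj (Sum.inl u) (Sum.inr e) ↔ XYZ.inc G z u e := Iff.rfl
lemma xyz_adj_rl {V : Type*} (G : SimpleGraph V) (x y z : XYZ) (u : V) (e : G.edgeSet) :
    (xyzTransform G x y z).Adj (Sum.inr e) (Sum.inl u) ↔ XYZ.inc G z u e := Iff.rfl
lemma xyz_adj_rr {V : Type*} (G : SimpleGraph V) (x y z : XYZ) (e f : G.edgeSet) :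
    (xyzTransform G x y z).Adj (Sum.inr e) (Sum.inr f) ↔ XYZ.rel G.lineGraph y e f := Iff.rfl
set_option maxHeartbeats 2000000 in
open Matrix SimpleGraph in
lemma xyz_key_matrix {V : Type*} [Fintype V] (G : SimpleGraph V) [DecidableRel G.Adj] (r n m : ℕ)
    (hn : Fintype.card V = n) (hm : Fintype.card G.edgeSet = m)
    (hreg : G.IsRegularOfDegree r) (hrn : r < n) (hm1 : 1 ≤ m) (lam : ℝ) :
    fQ (xyzTransform G .minus .one .one) lam
      = (Matrix.fromBlocks
          ((lam - m - n + 2 + r) • 1 + G.adjMatrix ℝ) 0 0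
          ((lam - m - n + 2) • (1 : Matrix G.edgeSet G.edgeSet ℝ))
        + Matrix.replicateCol Unit (fun _ => (-1:ℝ)) * Matrix.replicateRow Unit (fun _ => (1:ℝ))).det := by
  unfold fQ
  apply my_det_congr
  have hc1 : ((n - 1 - r : ℕ) : ℝ) = (n : ℝ) - 1 - r := by
    rw [Nat.cast_sub (by omega), Nat.cast_sub (by omega)]
    norm_num
  have hm2 : ∀ (inst : Fintype G.edgeSet), @Fintype.card _ inst = m := fun inst => by
    rw [Subsingleton.elim inst G.fintypeEdgeSet]; exact hm
  have hreg2 : ∀ (u : V) (inst : Fintype (G.neighborSet u)), @SimpleGraph.degree _ G u inst = r :=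
    fun u inst => by
      rw [Subsingleton.elim inst (SimpleGraph.neighborSetFintype G u)]; exact hreg u
  have hd1 : ∀ u : V, (((xyzTransform G .minus .one .one).degree (Sum.inl u) : ℕ) : ℝ)
      = (n : ℝ) - 1 - r + m := by
    intro u
    rw [xyz_deg_inl, Nat.cast_add, hn, hm2 _, hreg2 u _, hc1]
  have hd2 : ∀ e : G.edgeSet, (((xyzTransform G .minus .one .one).degree (Sum.inr e) : ℕ) : ℝ)
      = (m : ℝ) - 1 + n := by
    intro e
    rw [xyz_deg_inr, Nat.cast_add, hn, hm2 _, Nat.cast_sub hm1]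
    norm_num
  ext a b
  rcases a with u | e <;> rcases b with v | f
  · by_cases huv : u = v
    · subst huv
      simp [signlessLaplacian, xyz_adj_ll, XYZ.rel, hd1, Matrix.one_apply,
        Matrix.fromBlocks, Matrix.mul_apply, Matrix.smul_apply]
      ring
    · by_cases hadj : G.Adj u v
      · simp [signlessLaplacian, xyz_adj_ll, XYZ.rel, huv, hadj, Matrix.one_apply,
          Matrix.fromBlocks, Matrix.mul_apply, Matrix.smul_apply]
      · simp [signlessLaplacian, xyz_adj_ll, XYZ.rel, huv, hadj, Matrix.one_apply,
          Matrix.fromBlocks, Matrix.mul_apply, Matrix.smul_apply]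
  · simp [signlessLaplacian, xyz_adj_lr, XYZ.inc, Matrix.one_apply,
      Matrix.fromBlocks, Matrix.mul_apply, Matrix.smul_apply]
  · simp [signlessLaplacian, xyz_adj_rl, XYZ.inc, Matrix.one_apply,
      Matrix.fromBlocks, Matrix.mul_apply, Matrix.smul_apply]
  · by_cases hef : e = f
    · subst hef
      simp [signlessLaplacian, xyz_adj_rr, XYZ.rel, hd2, Matrix.one_apply,
        Matrix.fromBlocks, Matrix.mul_apply, Matrix.smul_apply]
      ring
    · simp [signlessLaplacian, xyz_adj_rr, XYZ.rel, hef, Matrix.one_apply,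
        Matrix.fromBlocks, Matrix.mul_apply, Matrix.smul_apply]
open Matrix SimpleGraph in
lemma xyz_det_good {V : Type*} [Fintype V] (G : SimpleGraph V) [DecidableRel G.Adj] (r n m : ℕ)
    (hn : Fintype.card V = n) (hm : Fintype.card G.edgeSet = m)
    (hreg : G.IsRegularOfDegree r) (hrn : r < n) (hm1 : 1 ≤ m)
    (q : Fin n → ℝ)
    (hlast : q ⟨n - 1, by omega⟩ = 2 * r)
    (hq : ∀ x : ℝ, fQ G x = ∏ i : Fin n, (x - q i)) (lam : ℝ)
    (hμ : lam - m - n + 2 ≠ 0) (hqi : ∀ i : Fin n, lam - m - n + 2 + q i ≠ 0) :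
      fQ (xyzTransform G XYZ.minus XYZ.one XYZ.one) lam =
        ((lam - 2 * m - n + 2) * (lam - m - 2 * n + 2 * r + 2) - m * n) *
          (lam - m - n + 2) ^ (m - 1) *
          ∏ i : Fin (n - 1), (lam - m - n + 2 + q (Fin.castLE (Nat.sub_le n 1) i)) := by
  classical
  set μ : ℝ := lam - m - n + 2 with hμdef
  set A := G.adjMatrix ℝ with hA
  set B : Matrix V V ℝ := (μ + r) • 1 + A with hB
  set M0 : Matrix (V ⊕ G.edgeSet) (V ⊕ G.edgeSet) ℝ :=
    Matrix.fromBlocks B 0 0 (μ • 1) with hM0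
  have hm2 : ∀ (inst : Fintype G.edgeSet), @Fintype.card _ inst = m := fun inst => by
    rw [Subsingleton.elim inst G.fintypeEdgeSet]; exact hm
  have hreg2 : ∀ (u : V) (inst : Fintype (G.neighborSet u)), @SimpleGraph.degree _ G u inst = r :=
    fun u inst => by
      rw [Subsingleton.elim inst (SimpleGraph.neighborSetFintype G u)]; exact hreg u
  have h2r : μ + 2 * r ≠ 0 := by
    have := hqi ⟨n - 1, by omega⟩
    rwa [hlast] at this
  -- signless Laplacian of a regular graph
  have hQreg : signlessLaplacian G = (r : ℝ) • 1 + A := by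
    ext u v
    by_cases huv : u = v
    · subst huv
      simp [signlessLaplacian, Matrix.one_apply, hA, hreg2 u _]
    · simp [signlessLaplacian, Matrix.one_apply, huv, hA, SimpleGraph.adjMatrix_apply]
  -- determinant of B
  have hdetB : B.det = ∏ i : Fin n, (μ + q i) := by
    have e1 : ((-1 : ℝ)) • B = (-μ) • (1 : Matrix V V ℝ) - signlessLaplacian G := by
      rw [hQreg, hB]
      module
    have e2 : ((-1 : ℝ) • B).det = (-1 : ℝ) ^ n * B.det := by
      rw [Matrix.det_smul, hn]
    have e3 : ((-1 : ℝ) • B).det = ∏ i : Fin n, (-μ - q i) := by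
      rw [e1, ← fQ, hq]
    have e4 : ∏ i : Fin n, (-μ - q i) = (-1 : ℝ) ^ n * ∏ i : Fin n, (μ + q i) := by
      have h0 : ∀ i : Fin n, (-μ - q i) = (-1) * (μ + q i) := fun i => by ring
      simp_rw [h0]
      rw [Finset.prod_mul_distrib, Finset.prod_const, Finset.card_univ, Fintype.card_fin]
    have := e2.symm.trans (e3.trans e4)
    exact mul_left_cancel₀ (pow_ne_zero n (by norm_num)) this
  have hprodne : (∏ i : Fin n, (μ + q i)) ≠ 0 := Finset.prod_ne_zero_iff.2 fun i _ => hqi i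
  -- determinant of M0
  have hdetM0 : M0.det = (∏ i : Fin n, (μ + q i)) * μ ^ m := by
    rw [hM0, Matrix.det_fromBlocks_zero₂₁, hdetB, Matrix.det_smul, Matrix.det_one, hm2 _, mul_one]
  have hdetM0unit : IsUnit M0.det := by
    rw [hdetM0]
    exact (mul_ne_zero hprodne (pow_ne_zero m hμ)).isUnit
  -- the vector w with M0 * w = 1
  set w : V ⊕ G.edgeSet → ℝ := Sum.elim (fun _ => (μ + 2 * r)⁻¹) (fun _ => μ⁻¹) with hw
  have hM0w : M0 *ᵥ w = fun _ => (1 : ℝ) := by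
    rw [hM0, Matrix.fromBlocks_mulVec]
    have hwl : (w ∘ Sum.inl) = fun _ : V => (μ + 2 * r)⁻¹ := rfl
    have hwr : (w ∘ Sum.inr) = fun _ : G.edgeSet => μ⁻¹ := rfl
    funext a
    rcases a with u | e
    · simp only [Sum.elim_inl, Pi.add_apply, hwl, hwr, Matrix.zero_mulVec, Pi.zero_apply, add_zero]
      rw [hB]
      simp only [Matrix.add_mulVec, Matrix.smul_mulVec, Matrix.one_mulVec, Pi.add_apply,
        Pi.smul_apply, smul_eq_mul]
      rw [hA, SimpleGraph.adjMatrix_mulVec_apply]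
      rw [Finset.sum_const, SimpleGraph.card_neighborFinset_eq_degree, hreg2 u _]
      push_cast
      rw [nsmul_eq_mul]
      push_cast
      field_simp
      rw [← mul_inv_cancel₀ h2r]
      ring
    · simp only [Sum.elim_inr, Pi.add_apply, hwl, hwr, Matrix.zero_mulVec, Pi.zero_apply, zero_add]
      rw [Matrix.smul_mulVec, Matrix.one_mulVec]
      simp only [Pi.smul_apply, smul_eq_mul]
      field_simp
  have hwinv : M0⁻¹ *ᵥ (fun _ => (1 : ℝ)) = w := by
    rw [← hM0w, Matrix.mulVec_mulVec, Matrix.nonsing_inv_mul _ hdetM0unit, Matrix.one_mulVec]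
  -- the full determinant
  have hdot : (fun _ : V ⊕ G.edgeSet => (1:ℝ)) ⬝ᵥ w = n * (μ + 2*r)⁻¹ + m * μ⁻¹ := by
    rw [dotProduct]
    rw [Fintype.sum_sum_type]
    simp only [one_mul, hw, Sum.elim_inl, Sum.elim_inr]
    rw [Finset.sum_const, Finset.sum_const, Finset.card_univ, Finset.card_univ, hn, hm2 _,
      nsmul_eq_mul, nsmul_eq_mul]
  have hdetM : fQ (xyzTransform G XYZ.minus XYZ.one XYZ.one) lam
      = M0.det * (1 - (n * (μ + 2*r)⁻¹ + m * μ⁻¹)) := by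
    rw [xyz_key_matrix G r n m hn hm hreg hrn hm1 lam, ← hμdef, ← hA, ← hB, ← hM0]
    rw [Matrix.det_add_mul _ _ hdetM0unit]
    congr 1
    rw [Matrix.det_unique]
    simp only [Pi.add_apply, Matrix.add_apply, Matrix.one_apply_eq]
    rw [Matrix.mul_assoc, ← Matrix.replicateCol_mulVec]
    rw [Matrix.replicateRow_mul_replicateCol_apply]
    have : (fun _ : V ⊕ G.edgeSet => (-1:ℝ)) = -(fun _ => (1:ℝ)) := by funext a; simp
    rw [this, Matrix.mulVec_neg, hwinv, dotProduct_neg, hdot]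
    ring
  -- final algebra
  obtain ⟨k, rfl⟩ : ∃ k, n = k + 1 := ⟨n - 1, by omega⟩
  obtain ⟨l, rfl⟩ : ∃ l, m = l + 1 := ⟨m - 1, by omega⟩
  have hsplit : (∏ i : Fin (k+1), (μ + q i))
      = (μ + 2*r) * ∏ i : Fin ((k+1) - 1), (μ + q (Fin.castLE (Nat.sub_le (k+1) 1) i)) := by
    rw [Fin.prod_univ_castSucc]
    have hlast' : q (Fin.last k) = 2 * r := hlast
    rw [hlast', mul_comm]
    rfl
  have hlam : lam = μ + (((l+1:ℕ)):ℝ) + (((k+1:ℕ)):ℝ) - 2 := by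
    rw [hμdef]; push_cast; ring
  have hscalar : (μ + 2*(r:ℝ)) * (μ^l * μ) *
        (1 - ((((k+1:ℕ)):ℝ) * (μ + 2*(r:ℝ))⁻¹ + (((l+1:ℕ)):ℝ) * μ⁻¹))
      = ((lam - 2*(((l+1:ℕ)):ℝ) - (((k+1:ℕ)):ℝ) + 2) *
          (lam - (((l+1:ℕ)):ℝ) - 2*(((k+1:ℕ)):ℝ) + 2*(r:ℝ) + 2)
          - (((l+1:ℕ)):ℝ) * (((k+1:ℕ)):ℝ)) * μ^l := by
    rw [hlam]
    push_cast
    field_simp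
    ring
  rw [hdetM, hdetM0, hsplit]
  simp only [Nat.add_sub_cancel, pow_succ]
  set P := ∏ i : Fin (k + 1 - 1), (μ + q (Fin.castLE (Nat.sub_le (k+1) 1) i)) with hP
  linear_combination P * hscalar
theorem signless_charpoly_xyz_m11 {V : Type*} [Fintype V] (G : SimpleGraph V) (r n m : ℕ)
    (hn : Fintype.card V = n) (hm : Fintype.card G.edgeSet = m)
    (hreg : G.IsRegularOfDegree r) (hm1 : 1 ≤ m) (hn0 : 0 < n)
    (q : Fin n → ℝ) (hmono : Monotone q)
    (hlast : q ⟨n - 1, by omega⟩ = 2 * r)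
    (hq : ∀ x : ℝ, fQ G x = ∏ i : Fin n, (x - q i)) :
    ∀ lam : ℝ,
      fQ (xyzTransform G XYZ.minus XYZ.one XYZ.one) lam =
        ((lam - 2 * m - n + 2) * (lam - m - 2 * n + 2 * r + 2) - m * n) *
          (lam - m - n + 2) ^ (m - 1) *
          ∏ i : Fin (n - 1), (lam - m - n + 2 + q (Fin.castLE (Nat.sub_le n 1) i)) := by
  classical
  intro lam
  have hne : Nonempty V := by
    rw [← Fintype.card_pos_iff, hn]
    exact hn0
  obtain ⟨v0⟩ := hne
  have hrn : r < n := by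
    rw [← hn, ← hreg v0]
    exact G.degree_lt_card_verts v0
  set c : ℝ := (m : ℝ) + n - 2 with hc
  set S : Set ℝ := insert c (Set.range fun i : Fin n => c - q i) with hS
  have hSfin : S.Finite := (Set.finite_range _).insert c
  have hdense : Dense Sᶜ := hSfin.countable.dense_compl ℝ
  have hcont1 : Continuous fun x : ℝ =>
      fQ (xyzTransform G XYZ.minus XYZ.one XYZ.one) x := by
    have hfun : (fun x : ℝ => fQ (xyzTransform G XYZ.minus XYZ.one XYZ.one) x)
        = fun x : ℝ => (x • (1 : Matrix (V ⊕ G.edgeSet) (V ⊕ G.edgeSet) ℝ)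
            - signlessLaplacian (xyzTransform G XYZ.minus XYZ.one XYZ.one)).det := by
      funext x
      unfold fQ
      apply my_det_congr
      ext i j
      by_cases h : i = j <;> simp [Matrix.one_apply, h]
    rw [hfun]
    apply Continuous.matrix_det
    apply continuous_matrix
    intro i j
    simp only [Matrix.sub_apply, Matrix.smul_apply, smul_eq_mul]
    exact (continuous_id.mul continuous_const).sub continuous_const
  have hcont2 : Continuous fun x : ℝ =>
      ((x - 2 * m - n + 2) * (x - m - 2 * n + 2 * r + 2) - m * n) *
        (x - m - n + 2) ^ (m - 1) *
        ∏ i : Fin (n - 1), (x - m - n + 2 + q (Fin.castLE (Nat.sub_le n 1) i)) := by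
    have hb : ∀ a : ℝ, Continuous fun x : ℝ => x + a := fun a => continuous_id.add continuous_const
    apply Continuous.mul
    · apply Continuous.mul
      · apply Continuous.sub
        · have h1 : (fun x : ℝ => x - 2 * m - n + 2) = fun x : ℝ => x + (- (2*m) - n + 2) := by
            funext x; ring
          have h2 : (fun x : ℝ => x - m - 2 * n + 2 * r + 2)
              = fun x : ℝ => x + (- (m:ℝ) - 2 * n + 2 * r + 2) := by
            funext x; ring
          exact Continuous.mul (h1 ▸ hb _) (h2 ▸ hb _)
        · exact continuous_const
      · have h3 : (fun x : ℝ => x - m - n + 2) = fun x : ℝ => x + (- (m:ℝ) - n + 2) := by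
          funext x; ring
        exact Continuous.pow (h3 ▸ hb _) _
    · apply continuous_finset_prod
      intro i _
      have h4 : (fun x : ℝ => x - m - n + 2 + q (Fin.castLE (Nat.sub_le n 1) i))
          = fun x : ℝ => x + (- (m:ℝ) - n + 2 + q (Fin.castLE (Nat.sub_le n 1) i)) := by
        funext x; ring
      exact h4 ▸ hb _
  have heq : Set.EqOn
      (fun x : ℝ => fQ (xyzTransform G XYZ.minus XYZ.one XYZ.one) x)
      (fun x : ℝ =>
        ((x - 2 * m - n + 2) * (x - m - 2 * n + 2 * r + 2) - m * n) *
          (x - m - n + 2) ^ (m - 1) *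
          ∏ i : Fin (n - 1), (x - m - n + 2 + q (Fin.castLE (Nat.sub_le n 1) i))) Sᶜ := by
    intro x hx
    have hx' : ¬ (x = c ∨ ∃ i : Fin n, c - q i = x) := by
      intro h
      apply hx
      rw [hS, Set.mem_insert_iff]
      rcases h with h | ⟨i, hi⟩
      · exact Or.inl h
      · exact Or.inr ⟨i, hi⟩
    push_neg at hx'
    obtain ⟨hx1, hx2⟩ := hx'
    apply xyz_det_good G r n m hn hm hreg hrn hm1 q hlast hq x
    · intro h
      apply hx1
      rw [hc]
      linarith
    · intro i h
      apply hx2 i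
      rw [hc]
      linarith
  have := Continuous.ext_on hdense hcont1 hcont2 heq
  exact congrFun this lam
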